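/- Let F be a complex subspace of V_ℂ such that V_ℂ = F ⊕ conj(F), and let L ⊆ V be a ℤ-lattice. Then the image of L under the composite map V → V_ℂ → V_ℂ/F (inclusion into the complexification followed by the quotient projection) is a ℤ-lattice in the finite-dimensional real vector space underlying V_ℂ/F; consequently the quotient (V_ℂ/F)/L is a compact complex torus. (This is the statement that the Griffiths intermediate jacobian of an integral Hodge structure of odd weight is a complex torus.) -/

import Mathlib

open TensorProduct

instance : RingHomSurjective (starRingEnd ℂ) :=
  ⟨fun x => ⟨star x, star_star x⟩⟩

/-- Conjugation on the complexification `ℂ ⊗[ℝ] V`, `z ⊗ v ↦ z̄ ⊗ v`,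
as a `starRingEnd ℂ`-semilinear map. -/
noncomputable def conjC (V : Type*) [AddCommGroup V] [Module ℝ V] :
    (ℂ ⊗[ℝ] V) →ₛₗ[starRingEnd ℂ] (ℂ ⊗[ℝ] V) where
  toFun := TensorProduct.map Complex.conjAe.toLinearMap LinearMap.id
  map_add' := map_add _
  map_smul' := by
    intro z x
    induction x using TensorProduct.induction_on with
    | zero => simp
    | tmul c v =>
        simp [TensorProduct.smul_tmul', TensorProduct.map_tmul, map_mul]
    | add x y hx hy =>
        simp only [smul_add, map_add]
        exact congrArg₂ (· + ·) hx hy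

/-- The natural inclusion `V → ℂ ⊗[ℝ] V`, `v ↦ 1 ⊗ v`. -/
noncomputable def iotaC (V : Type*) [AddCommGroup V] [Module ℝ V] :
    V →ₗ[ℝ] ℂ ⊗[ℝ] V :=
  TensorProduct.mk ℝ ℂ V 1

/-- A ℤ-lattice in a finite-dimensional real vector space, i.e. a discrete additive
subgroup spanning the space over ℝ; equivalently (which is the formulation used here),
the ℤ-span of an ℝ-basis. -/
def IsLatticeIn (E : Type*) [AddCommGroup E] [Module ℝ E] [FiniteDimensional ℝ E]
    (L : Submodule ℤ E) : Prop :=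
  ∃ b : Module.Basis (Fin (Module.finrank ℝ E)) ℝ E,
    L = Submodule.span ℤ (Set.range b)

/-- Let `V` be a finite-dimensional real vector space, `F` a complex
subspace of `V_ℂ = ℂ ⊗[ℝ] V` with `V_ℂ = F ⊕ conj(F)`, and `L ⊆ V` a ℤ-lattice.
Then the image of `L` under the composite `V → V_ℂ → V_ℂ/F` is a ℤ-lattice in the
finite-dimensional real vector space underlying `V_ℂ/F` (consequently the quotient
`(V_ℂ/F)/L` is a compact complex torus: this is the statement that the Griffiths
intermediate jacobian of an integral Hodge structure of odd weight is a complex torus). -/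
noncomputable def reC (V : Type*) [AddCommGroup V] [Module ℝ V] :
    (ℂ ⊗[ℝ] V) →ₗ[ℝ] V :=
  TensorProduct.lift ((LinearMap.lsmul ℝ V) ∘ₗ Complex.reLm)

noncomputable def imC (V : Type*) [AddCommGroup V] [Module ℝ V] :
    (ℂ ⊗[ℝ] V) →ₗ[ℝ] V :=
  TensorProduct.lift ((LinearMap.lsmul ℝ V) ∘ₗ Complex.imLm)

@[simp] lemma reC_tmul {V : Type*} [AddCommGroup V] [Module ℝ V] (z : ℂ) (v : V) :
    reC V (z ⊗ₜ[ℝ] v) = z.re • v := rfl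

@[simp] lemma imC_tmul {V : Type*} [AddCommGroup V] [Module ℝ V] (z : ℂ) (v : V) :
    imC V (z ⊗ₜ[ℝ] v) = z.im • v := rfl

@[simp] lemma conjC_tmul {V : Type*} [AddCommGroup V] [Module ℝ V] (z : ℂ) (v : V) :
    conjC V (z ⊗ₜ[ℝ] v) = (starRingEnd ℂ z) ⊗ₜ[ℝ] v := rfl

lemma conjC_conjC {V : Type*} [AddCommGroup V] [Module ℝ V] (x : ℂ ⊗[ℝ] V) :
    conjC V (conjC V x) = x := by
  induction x using TensorProduct.induction_on with
  | zero => simp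
  | tmul z v => simp
  | add x y hx hy => simp [map_add, hx, hy]

lemma decompC {V : Type*} [AddCommGroup V] [Module ℝ V] (x : ℂ ⊗[ℝ] V) :
    (1 : ℂ) ⊗ₜ[ℝ] reC V x + Complex.I • ((1 : ℂ) ⊗ₜ[ℝ] imC V x) = x := by
  induction x using TensorProduct.induction_on with
  | zero => simp
  | tmul z v =>
      have h1 : ∀ (c : ℂ), c • ((1 : ℂ) ⊗ₜ[ℝ] v) = c ⊗ₜ[ℝ] v := by
        intro c; rw [TensorProduct.smul_tmul', smul_eq_mul, mul_one]
      rw [reC_tmul, imC_tmul, TensorProduct.tmul_smul, TensorProduct.tmul_smul]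
      rw [algebra_compatible_smul ℂ z.re, algebra_compatible_smul ℂ z.im, smul_smul]
      rw [h1, h1, ← TensorProduct.add_tmul]
      congr 1
      simp only [Complex.coe_algebraMap]
      rw [mul_comm, Complex.re_add_im]
  | add x y hx hy =>
      rw [map_add, map_add, TensorProduct.tmul_add, TensorProduct.tmul_add, smul_add]
      conv_rhs => rw [← hx, ← hy]
      abel

lemma conjC_fixed {V : Type*} [AddCommGroup V] [Module ℝ V] {x : ℂ ⊗[ℝ] V}
    (h : conjC V x = x) : x = (1 : ℂ) ⊗ₜ[ℝ] reC V x := by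
  have hd := decompC x
  have hc : (1 : ℂ) ⊗ₜ[ℝ] reC V x - Complex.I • ((1 : ℂ) ⊗ₜ[ℝ] imC V x) = x := by
    conv_rhs => rw [← h]
    conv_rhs => rw [← hd]
    rw [map_add, (conjC V).map_smulₛₗ]
    simp [sub_eq_add_neg]
  have h2 : ((2 : ℂ) * Complex.I) • ((1 : ℂ) ⊗ₜ[ℝ] imC V x) = 0 := by
    have := congrArg₂ (· - ·) hd hc
    simp only [sub_self] at this
    rw [add_sub_sub_cancel, ← two_smul ℂ, smul_smul] at this
    exact this
  have h3 : (1 : ℂ) ⊗ₜ[ℝ] imC V x = 0 := by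
    have hne : (2 : ℂ) * Complex.I ≠ 0 := by simp [Complex.I_ne_zero]
    exact (smul_eq_zero.mp h2).resolve_left hne
  conv_lhs => rw [← hd]
  rw [h3, smul_zero, add_zero]

theorem stmt7' {V : Type*} [AddCommGroup V] [Module ℝ V] [FiniteDimensional ℝ V]
    (F : Submodule ℂ (ℂ ⊗[ℝ] V))
    (hcompl : IsCompl F (F.map (conjC V)))
    (L : Submodule ℤ V)
    (hL : ∃ b : Module.Basis (Fin (Module.finrank ℝ V)) ℝ V,
      L = Submodule.span ℤ (Set.range b)) :
    ∃ b : Module.Basis (Fin (Module.finrank ℝ ((ℂ ⊗[ℝ] V) ⧸ F))) ℝ ((ℂ ⊗[ℝ] V) ⧸ F),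
      (L.map (((F.mkQ.restrictScalars ℝ) ∘ₗ iotaC V).restrictScalars ℤ)) =
        Submodule.span ℤ (Set.range b) := by
  set f : V →ₗ[ℝ] (ℂ ⊗[ℝ] V) ⧸ F := (F.mkQ.restrictScalars ℝ) ∘ₗ iotaC V with hf
  have hinj : Function.Injective f := by
    intro v w hvw
    have h0 : f (v - w) = 0 := by rw [map_sub, hvw, sub_self]
    have hmem : (1 : ℂ) ⊗ₜ[ℝ] (v - w) ∈ F := by
      have : F.mkQ ((1 : ℂ) ⊗ₜ[ℝ] (v - w)) = 0 := h0
      rwa [Submodule.mkQ_apply, Submodule.Quotient.mk_eq_zero] at this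
    have hmem' : (1 : ℂ) ⊗ₜ[ℝ] (v - w) ∈ F.map (conjC V) := by
      refine ⟨(1 : ℂ) ⊗ₜ[ℝ] (v - w), hmem, ?_⟩
      simp
    have hz : (1 : ℂ) ⊗ₜ[ℝ] (v - w) = 0 := by
      have := hcompl.inf_eq_bot
      have : (1 : ℂ) ⊗ₜ[ℝ] (v - w) ∈ (⊥ : Submodule ℂ (ℂ ⊗[ℝ] V)) := by
        rw [← this]; exact ⟨hmem, hmem'⟩
      simpa using this
    have : v - w = 0 := by
      have := congrArg (reC V) hz
      simpa using this
    exact sub_eq_zero.mp this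
  have hsurj : Function.Surjective f := by
    intro y
    obtain ⟨x, rfl⟩ := Submodule.mkQ_surjective F y
    obtain ⟨p, hp, q, hq, hpq⟩ := Submodule.mem_sup.mp
      (by rw [hcompl.sup_eq_top]; trivial :
        x ∈ F ⊔ F.map (conjC V))
    obtain ⟨q', hq', rfl⟩ := hq
    set w : ℂ ⊗[ℝ] V := conjC V q' + q' with hw
    have hwfix : conjC V w = w := by
      rw [hw, map_add, conjC_conjC, add_comm]
    refine ⟨reC V w, ?_⟩
    have hweq : (1 : ℂ) ⊗ₜ[ℝ] reC V w = w := (conjC_fixed hwfix).symm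
    have : f (reC V w) = F.mkQ w := by
      show F.mkQ ((1 : ℂ) ⊗ₜ[ℝ] reC V w) = F.mkQ w
      rw [hweq]
    rw [this, hw]
    have h1 : F.mkQ q' = 0 := by
      rw [Submodule.mkQ_apply, Submodule.Quotient.mk_eq_zero]; exact hq'
    have h2 : F.mkQ p = 0 := by
      rw [Submodule.mkQ_apply, Submodule.Quotient.mk_eq_zero]; exact hp
    rw [map_add, h1, add_zero, ← hpq, map_add, h2, zero_add]
  let e : V ≃ₗ[ℝ] (ℂ ⊗[ℝ] V) ⧸ F := LinearEquiv.ofBijective f ⟨hinj, hsurj⟩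
  obtain ⟨b, hb⟩ := hL
  have hdim : Module.finrank ℝ V = Module.finrank ℝ ((ℂ ⊗[ℝ] V) ⧸ F) := e.finrank_eq
  refine ⟨(b.map e).reindex (finCongr hdim), ?_⟩
  have hrange : Set.range ⇑((b.map e).reindex (finCongr hdim)) = ⇑f '' Set.range ⇑b := by
    rw [Module.Basis.range_reindex]
    have hcoe : ⇑(b.map e) = ⇑f ∘ ⇑b := by
      ext i; simp [Module.Basis.map_apply, e, LinearEquiv.ofBijective_apply]; rfl
    rw [hcoe, Set.range_comp]
  rw [hb, Submodule.map_span, LinearMap.coe_restrictScalars, ← hrange]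

theorem stmt7 {V : Type*} [AddCommGroup V] [Module ℝ V] [FiniteDimensional ℝ V]
    (F : Submodule ℂ (ℂ ⊗[ℝ] V))
    (hcompl : IsCompl F (F.map (conjC V)))
    (L : Submodule ℤ V)
    (hL : IsLatticeIn V L) :
    IsLatticeIn ((ℂ ⊗[ℝ] V) ⧸ F)
      (L.map (((F.mkQ.restrictScalars ℝ) ∘ₗ iotaC V).restrictScalars ℤ)) :=
  stmt7' F hcompl L hL
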